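/- Let R = MvPolynomial (Fin 2) ℂ with variables x, y, let u = 1 − x·y, and let A = Localization.Away u, writing x, y, u also for their images in A (u is invertible in A). Let D_x and D_y be the unique derivations of A extending the partial derivatives ∂_x and ∂_y of R. Fix λ ∈ ℤ and a natural number k with k + λ ≥ 0, and let S_k ⊆ A be the ℂ-span of the elements x^i·y^j·u^{−k} for 0 ≤ i ≤ k + λ and 0 ≤ j ≤ k. Then S_k is mapped into itself by each of the ℂ-linear operators D₁(f) = D_x f − y²·D_y f, D₂(f) = 2x·D_x f − 2y·D_y f − λ·f, D₃(f) = x²·D_x f − D_y f − λ·x·f. -/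
import Mathlib


open MvPolynomial

/-- The polynomial ring `ℂ[x,y]`. -/
abbrev qcR : Type := MvPolynomial (Fin 2) ℂ

/-- `u = 1 − x·y`. -/
noncomputable def qcU : qcR := 1 - X 0 * X 1

/-- The localization `A` of `ℂ[x,y]` at the powers of `u = 1 − xy`. -/
abbrev qcA : Type := Localization.Away qcU

/-- `S_k`: the `ℂ`-span of the elements `x^i·y^j·u^{−k}` for `0 ≤ i ≤ k + λ`,
`0 ≤ j ≤ k`, where `v = u⁻¹`. -/
noncomputable def qcSk (lam : ℤ) (k : ℕ) (v : qcA) : Submodule ℂ qcA :=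
  Submodule.span ℂ {f : qcA | ∃ i j : ℕ, (i : ℤ) ≤ (k : ℤ) + lam ∧ j ≤ k ∧
    f = algebraMap qcR qcA (X 0 ^ i * X 1 ^ j) * v ^ k}

set_option maxHeartbeats 1000000 in
lemma qc_aux_pow (n : ℕ) (x : qcA) : (n : qcA) * x ^ (n - 1) * x = (n : qcA) * x ^ n := by
  cases n with
  | zero => simp
  | succ m => rw [Nat.add_sub_cancel, pow_succ]; ring

set_option maxHeartbeats 1000000 in
/-- The module `S_k` is invariant under the three first-order operators
`D₁ = Dₓ − y²·D_y`, `D₂ = 2x·Dₓ − 2y·D_y − λ`, `D₃ = x²·Dₓ − D_y − λx` realizing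
`sl(2,ℂ)` with cocycle parameter `λ`. -/
theorem sl2_twoDim_module_invariant (lam : ℤ) (k : ℕ) (hk : 0 ≤ (k : ℤ) + lam)
    (v : qcA) (hv : algebraMap qcR qcA qcU * v = 1)
    (Dx Dy : Derivation ℂ qcA qcA)
    (hDx : ∀ p : qcR, Dx (algebraMap qcR qcA p) = algebraMap qcR qcA (pderiv 0 p))
    (hDy : ∀ p : qcR, Dy (algebraMap qcR qcA p) = algebraMap qcR qcA (pderiv 1 p)) :
    ∀ f ∈ qcSk lam k v,
      (Dx f - algebraMap qcR qcA (X 1) ^ 2 * Dy f ∈ qcSk lam k v) ∧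
      (2 * algebraMap qcR qcA (X 0) * Dx f - 2 * algebraMap qcR qcA (X 1) * Dy f
          - (lam : ℂ) • f ∈ qcSk lam k v) ∧
      (algebraMap qcR qcA (X 0) ^ 2 * Dx f - Dy f
          - (lam : ℂ) • (algebraMap qcR qcA (X 0) * f) ∈ qcSk lam k v) := by
  intro f hf
  set a : qcA := algebraMap qcR qcA (X 0) with ha
  set b : qcA := algebraMap qcR qcA (X 1) with hb
  have hab : algebraMap qcR qcA qcU = 1 - a * b := by
    have h := map_sub (algebraMap qcR qcA) 1 (X 0 * X 1)
    rw [map_one, map_mul] at h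
    exact h
  have huv : (1 - a * b) * v = 1 := by rw [← hab]; exact hv
  have hDxa : Dx a = 1 := by rw [hDx]; simp
  have hDxb : Dx b = 0 := by rw [hDx]; simp [pderiv_X]
  have hDya : Dy a = 0 := by rw [hDy]; simp [pderiv_X]
  have hDyb : Dy b = 1 := by rw [hDy]; simp
  have hDxu : Dx (1 - a * b) = -b := by
    rw [map_sub, Derivation.map_one_eq_zero, Derivation.leibniz, hDxa, hDxb]
    simp
  have hDyu : Dy (1 - a * b) = -a := by
    rw [map_sub, Derivation.map_one_eq_zero, Derivation.leibniz, hDya, hDyb]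
    simp
  have hDxv : Dx v = b * v ^ 2 := by
    have h0 := congrArg Dx hv
    rw [Derivation.leibniz, Derivation.map_one_eq_zero, hab, hDxu, smul_eq_mul,
      smul_eq_mul] at h0
    linear_combination v * h0 - Dx v * huv
  have hDyv : Dy v = a * v ^ 2 := by
    have h0 := congrArg Dy hv
    rw [Derivation.leibniz, Derivation.map_one_eq_zero, hab, hDyu, smul_eq_mul,
      smul_eq_mul] at h0
    linear_combination v * h0 - Dy v * huv
  have hmem : ∀ i j : ℕ, (i : ℤ) ≤ (k : ℤ) + lam → j ≤ k →
      a ^ i * b ^ j * v ^ k ∈ qcSk lam k v := by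
    intro i j hi hj
    apply Submodule.subset_span
    exact ⟨i, j, hi, hj, by rw [map_mul, map_pow, map_pow]⟩
  have hsm : ∀ (c : ℂ) (x : qcA), c • x = algebraMap ℂ qcA c * x := fun c x =>
    Algebra.smul_def c x
  -- the three operators
  have key : ∀ i j : ℕ, (i : ℤ) ≤ (k : ℤ) + lam → j ≤ k →
      (Dx (a ^ i * b ^ j * v ^ k) - b ^ 2 * Dy (a ^ i * b ^ j * v ^ k) ∈ qcSk lam k v) ∧
      (2 * a * Dx (a ^ i * b ^ j * v ^ k) - 2 * b * Dy (a ^ i * b ^ j * v ^ k)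
        - (lam : ℂ) • (a ^ i * b ^ j * v ^ k) ∈ qcSk lam k v) ∧
      (a ^ 2 * Dx (a ^ i * b ^ j * v ^ k) - Dy (a ^ i * b ^ j * v ^ k)
        - (lam : ℂ) • (a * (a ^ i * b ^ j * v ^ k)) ∈ qcSk lam k v) := by
    intro i j hi hj
    have hA := qc_aux_pow i a
    have hB := qc_aux_pow j b
    have hV := qc_aux_pow k v
    have hDxg : Dx (a ^ i * b ^ j * v ^ k)
        = (i : qcA) * a ^ (i - 1) * (b ^ j * v ^ k)
          + (k : qcA) * v ^ (k - 1) * (b * v ^ 2) * (a ^ i * b ^ j) := by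
      rw [Derivation.leibniz, Derivation.leibniz, Derivation.leibniz_pow,
        Derivation.leibniz_pow, Derivation.leibniz_pow, hDxa, hDxb, hDxv]
      simp only [smul_eq_mul, nsmul_eq_mul]
      ring
    have hDyg : Dy (a ^ i * b ^ j * v ^ k)
        = (j : qcA) * b ^ (j - 1) * (a ^ i * v ^ k)
          + (k : qcA) * v ^ (k - 1) * (a * v ^ 2) * (a ^ i * b ^ j) := by
      rw [Derivation.leibniz, Derivation.leibniz, Derivation.leibniz_pow,
        Derivation.leibniz_pow, Derivation.leibniz_pow, hDya, hDyb, hDyv]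
      simp only [smul_eq_mul, nsmul_eq_mul]
      ring
    have hsmul : ∀ (c : ℂ) (x : qcA), c • x = algebraMap ℂ qcA c * x := fun c x =>
      Algebra.smul_def c x
    refine ⟨?_, ?_, ?_⟩
    · -- D₁
      have key1 : Dx (a ^ i * b ^ j * v ^ k) - b ^ 2 * Dy (a ^ i * b ^ j * v ^ k)
          = (i : ℂ) • (a ^ (i - 1) * b ^ j * v ^ k)
            + ((k : ℂ) - (j : ℂ)) • (a ^ i * b ^ (j + 1) * v ^ k) := by
        rw [hDxg, hDyg, hsmul, hsmul, map_sub, map_natCast, map_natCast, map_natCast]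
        linear_combination (-(b * a ^ i * v ^ k)) * hB
          + ((k : qcA) * a ^ i * b ^ (j + 1) * v ^ (k - 1) * v) * huv
          + (a ^ i * b ^ (j + 1)) * hV
      rw [key1]
      refine Submodule.add_mem _ (Submodule.smul_mem _ _ (hmem _ _ ?_ hj)) ?_
      · exact le_trans (by exact_mod_cast Nat.cast_le.mpr (Nat.sub_le i 1)) hi
      · rcases lt_or_eq_of_le hj with h | h
        · exact Submodule.smul_mem _ _ (hmem _ _ hi h)
        · have h0 : ((k : ℂ) - (j : ℂ)) = 0 := by rw [h]; ring
          have h1 : ((k : ℂ) - (j : ℂ)) • (a ^ i * b ^ (j + 1) * v ^ k) = 0 := by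
            rw [hsm, h0]; simp
          rw [h1]
          exact Submodule.zero_mem _
    · -- D₂
      have key2 : 2 * a * Dx (a ^ i * b ^ j * v ^ k) - 2 * b * Dy (a ^ i * b ^ j * v ^ k)
          - (lam : ℂ) • (a ^ i * b ^ j * v ^ k)
          = ((2 * i : ℂ) - (2 * j : ℂ) - (lam : ℂ)) • (a ^ i * b ^ j * v ^ k) := by
        rw [hDxg, hDyg, hsmul, hsmul, map_sub, map_sub, map_mul, map_mul, map_natCast,
          map_natCast, map_intCast, map_ofNat]
        linear_combination (2 * b ^ j * v ^ k) * hA - (2 * a ^ i * v ^ k) * hB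
      rw [key2]
      exact Submodule.smul_mem _ _ (hmem _ _ hi hj)
    · -- D₃
      have key3 : a ^ 2 * Dx (a ^ i * b ^ j * v ^ k) - Dy (a ^ i * b ^ j * v ^ k)
          - (lam : ℂ) • (a * (a ^ i * b ^ j * v ^ k))
          = ((i : ℂ) - (k : ℂ) - (lam : ℂ)) • (a ^ (i + 1) * b ^ j * v ^ k)
            - (j : ℂ) • (a ^ i * b ^ (j - 1) * v ^ k) := by
        rw [hDxg, hDyg, hsmul, hsmul, hsmul, map_sub, map_sub, map_natCast, map_natCast,
          map_natCast, map_intCast]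
        linear_combination (a * b ^ j * v ^ k) * hA
          - ((k : qcA) * a ^ (i + 1) * b ^ j * v ^ (k - 1) * v) * huv
          - (a ^ (i + 1) * b ^ j) * hV
      rw [key3]
      refine Submodule.sub_mem _ ?_ (Submodule.smul_mem _ _ (hmem _ _ hi
        (le_trans (Nat.sub_le j 1) hj)))
      rcases lt_or_eq_of_le hi with h | h
      · refine Submodule.smul_mem _ _ (hmem (i + 1) j ?_ hj)
        push_cast
        omega
      · have h0 : ((i : ℂ) - (k : ℂ) - (lam : ℂ)) = 0 := by
          have h2 : (i : ℂ) = (k : ℂ) + (lam : ℂ) := by exact_mod_cast h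
          rw [h2]; ring
        have h1 : ((i : ℂ) - (k : ℂ) - (lam : ℂ)) • (a ^ (i + 1) * b ^ j * v ^ k) = 0 := by
          rw [hsm, h0]; simp
        rw [h1]
        exact Submodule.zero_mem _
  -- linearity plumbing via span induction
  refine Submodule.span_induction (p := fun g _ =>
      (Dx g - b ^ 2 * Dy g ∈ qcSk lam k v) ∧
      (2 * a * Dx g - 2 * b * Dy g - (lam : ℂ) • g ∈ qcSk lam k v) ∧
      (a ^ 2 * Dx g - Dy g - (lam : ℂ) • (a * g) ∈ qcSk lam k v)) ?_ ?_ ?_ ?_ hf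
  · rintro g ⟨i, j, hi, hj, rfl⟩
    have : algebraMap qcR qcA (X 0 ^ i * X 1 ^ j) * v ^ k = a ^ i * b ^ j * v ^ k := by
      rw [map_mul, map_pow, map_pow]
    rw [this]
    exact key i j hi hj
  · simp only [map_zero, hsm, mul_zero, sub_zero]
    exact ⟨Submodule.zero_mem _, Submodule.zero_mem _, Submodule.zero_mem _⟩
  · rintro x y hx hy ⟨h1x, h2x, h3x⟩ ⟨h1y, h2y, h3y⟩
    refine ⟨?_, ?_, ?_⟩
    · have : Dx (x + y) - b ^ 2 * Dy (x + y)
          = (Dx x - b ^ 2 * Dy x) + (Dx y - b ^ 2 * Dy y) := by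
        simp only [map_add, hsm, mul_add]; ring
      rw [this]; exact Submodule.add_mem _ h1x h1y
    · have : 2 * a * Dx (x + y) - 2 * b * Dy (x + y) - (lam : ℂ) • (x + y)
          = (2 * a * Dx x - 2 * b * Dy x - (lam : ℂ) • x)
            + (2 * a * Dx y - 2 * b * Dy y - (lam : ℂ) • y) := by
        simp only [map_add, hsm, mul_add]; ring
      rw [this]; exact Submodule.add_mem _ h2x h2y
    · have : a ^ 2 * Dx (x + y) - Dy (x + y) - (lam : ℂ) • (a * (x + y))
          = (a ^ 2 * Dx x - Dy x - (lam : ℂ) • (a * x))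
            + (a ^ 2 * Dx y - Dy y - (lam : ℂ) • (a * y)) := by
        simp only [map_add, hsm, mul_add]; ring
      rw [this]; exact Submodule.add_mem _ h3x h3y
  · rintro c x hx ⟨h1x, h2x, h3x⟩
    refine ⟨?_, ?_, ?_⟩
    · have : Dx (c • x) - b ^ 2 * Dy (c • x) = c • (Dx x - b ^ 2 * Dy x) := by
        simp only [hsm, Derivation.leibniz, Derivation.map_algebraMap, smul_eq_mul,
          mul_zero, add_zero, zero_add]
        ring
      rw [this]; exact Submodule.smul_mem _ _ h1x
    · have : 2 * a * Dx (c • x) - 2 * b * Dy (c • x) - (lam : ℂ) • (c • x)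
          = c • (2 * a * Dx x - 2 * b * Dy x - (lam : ℂ) • x) := by
        simp only [hsm, Derivation.leibniz, Derivation.map_algebraMap, smul_eq_mul,
          mul_zero, add_zero, zero_add]
        ring
      rw [this]; exact Submodule.smul_mem _ _ h2x
    · have : a ^ 2 * Dx (c • x) - Dy (c • x) - (lam : ℂ) • (a * (c • x))
          = c • (a ^ 2 * Dx x - Dy x - (lam : ℂ) • (a * x)) := by
        simp only [hsm, Derivation.leibniz, Derivation.map_algebraMap, smul_eq_mul,
          mul_zero, add_zero, zero_add]
        ring
      rw [this]; exact Submodule.smul_mem _ _ h3x
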